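/- Let F be a finite field with exactly q elements, E a field extension of F, and α ∈ E not in the image of the algebra map F → E. Let S̄_α be the family of subsets of E of the form {λ·α' : λ ∈ F, λ ≠ 0} as α' ranges over S_α (the cosets of F* in S_α). If [F(α) : F] = 2 then S̄_α has exactly q elements; if [F(α) : F] > 2 then S̄_α has exactly q² + q elements. -/

import Mathlib

open IntermediateField

def Sset (F : Type*) {E : Type*} [Field F] [Field E] [Algebra F E] (α : E) : Set E :=
  {x | ∃ a b c d : F, a * d ≠ b * c ∧
    x = (algebraMap F E a * α + algebraMap F E b) / (algebraMap F E c * α + algebraMap F E d)}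

def Sbar (F : Type*) {E : Type*} [Field F] [Field E] [Algebra F E] (α : E) : Set (Set E) :=
  {s | ∃ α' ∈ Sset F α, s = {x | ∃ l : F, l ≠ 0 ∧ x = algebraMap F E l * α'}}

def cosetOf (F : Type*) {E : Type*} [Field F] [Field E] [Algebra F E] (β : E) : Set E :=
  {x | ∃ l : F, l ≠ 0 ∧ x = algebraMap F E l * β}

section aux
variable {F E : Type*} [Field F] [Field E] [Algebra F E] {α : E}

lemma Sbar_eq : Sbar F α = cosetOf F '' (Sset F α) := by
  ext s
  simp [Sbar, Set.mem_image, cosetOf, eq_comm]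

lemma indep1 (hα : α ∉ Set.range (algebraMap F E)) {x y : F}
    (h : algebraMap F E x * α + algebraMap F E y = 0) : x = 0 ∧ y = 0 := by
  rcases eq_or_ne x 0 with hx | hx
  · refine ⟨hx, ?_⟩
    rw [hx, map_zero, zero_mul, zero_add] at h
    exact (map_eq_zero _).mp h
  · exfalso
    apply hα
    refine ⟨-y / x, ?_⟩
    have hx' : (algebraMap F E) x ≠ 0 := by simpa using hx
    rw [map_div₀, map_neg]
    field_simp
    linear_combination -h

lemma den_ne (hα : α ∉ Set.range (algebraMap F E)) {c d : F} (h : ¬(c = 0 ∧ d = 0)) :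
    algebraMap F E c * α + algebraMap F E d ≠ 0 := fun h0 => h (indep1 hα h0)

lemma cosetOf_smul {lam : F} (hlam : lam ≠ 0) (β : E) :
    cosetOf F (algebraMap F E lam * β) = cosetOf F β := by
  ext x
  constructor
  · rintro ⟨l, hl, rfl⟩
    exact ⟨l * lam, mul_ne_zero hl hlam, by rw [map_mul]; ring⟩
  · rintro ⟨l, hl, rfl⟩
    refine ⟨l / lam, div_ne_zero hl hlam, ?_⟩
    rw [map_div₀]
    have h2 : (algebraMap F E) lam ≠ 0 := by simpa using hlam
    field_simp

lemma exists_sq (hα : α ∉ Set.range (algebraMap F E))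
    (hd : Module.finrank F (IntermediateField.adjoin F {α}) = 2) :
    ∃ s t : F, α ^ 2 = algebraMap F E s * α + algebraMap F E t := by
  set K := IntermediateField.adjoin F {α} with hK
  have hmem : α ∈ K := IntermediateField.mem_adjoin_simple_self F α
  set a : K := ⟨α, hmem⟩ with ha
  have hli : LinearIndependent F ![(1 : K), a] := by
    rw [LinearIndependent.pair_iff]
    intro s t hst
    have hE : algebraMap F E t * α + algebraMap F E s = 0 := by
      have hcoe : ∀ x : F, ((algebraMap F K x : K) : E) = algebraMap F E x := fun x =>
        (IsScalarTower.algebraMap_apply F K E x).symm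
      have h2 := congrArg (Subtype.val) hst
      push_cast at h2
      rw [Algebra.smul_def, Algebra.smul_def] at h2
      push_cast at h2
      simp only [hcoe, ha] at h2
      rw [← h2]; ring
    have := indep1 hα hE
    exact ⟨this.2, this.1⟩
  have hcard : Fintype.card (Fin 2) = Module.finrank F K := by simp [hd]
  let B := basisOfLinearIndependentOfCardEqFinrank hli hcard
  have hB : ∀ i, B i = ![(1 : K), a] i := fun i => by
    simp [B, coe_basisOfLinearIndependentOfCardEqFinrank]
  have hrep := B.sum_repr (a ^ 2)
  rw [Fin.sum_univ_two, hB 0, hB 1] at hrep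
  simp only [Matrix.cons_val_zero, Matrix.cons_val_one, Matrix.head_cons] at hrep
  refine ⟨B.repr (a ^ 2) 1, B.repr (a ^ 2) 0, ?_⟩
  have hcoe : ∀ x : F, ((algebraMap F K x : K) : E) = algebraMap F E x := fun x =>
    (IsScalarTower.algebraMap_apply F K E x).symm
  have h3 := congrArg (Subtype.val) hrep
  push_cast at h3
  rw [Algebra.smul_def, Algebra.smul_def] at h3
  push_cast at h3
  simp only [hcoe, ha] at h3
  rw [← h3]; ring

lemma alpha'_eq (hα : α ∉ Set.range (algebraMap F E)) {s t : F}
    (hα2 : α ^ 2 = algebraMap F E s * α + algebraMap F E t)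
    {a b c d : F} (hdet : a * d ≠ b * c) :
    ∃ u v : F, u ≠ 0 ∧
      (algebraMap F E a * α + algebraMap F E b) / (algebraMap F E c * α + algebraMap F E d)
        = algebraMap F E u * α + algebraMap F E v := by
  have hcd : ¬(c = 0 ∧ d = 0) := by
    rintro ⟨rfl, rfl⟩; simp at hdet
  have hΔ : d ^ 2 + s * c * d - t * c ^ 2 ≠ 0 := by
    intro h0
    rcases eq_or_ne c 0 with hc | hc
    · rw [hc] at h0
      simp at h0
      ring_nf at h0
      exact hcd ⟨hc, by simpa using h0⟩
    · have hcE : (algebraMap F E) c ≠ 0 := by simpa using hc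
      have h0E := congrArg (algebraMap F E) h0
      simp only [map_add, map_sub, map_mul, map_pow, map_zero] at h0E
      have key : (α + algebraMap F E (d / c)) * (α - algebraMap F E (s + d / c)) = 0 := by
        rw [map_div₀, map_add, map_div₀]
        field_simp
        linear_combination (algebraMap F E c)^2 * hα2 - h0E
      rcases mul_eq_zero.mp key with h1 | h1
      · have := indep1 hα (x := 1) (y := d / c) (by rw [map_one, one_mul]; exact h1)
        simp at this
      · exact hα ⟨s + d / c, by linear_combination -h1⟩
  refine ⟨(a * d - b * c) / (d ^ 2 + s * c * d - t * c ^ 2),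
    (b * c * s + b * d - a * c * t) / (d ^ 2 + s * c * d - t * c ^ 2),
    div_ne_zero (sub_ne_zero.mpr hdet) hΔ, ?_⟩
  rw [div_eq_iff (den_ne hα hcd)]
  have e1 : (a * d - b * c) / (d ^ 2 + s * c * d - t * c ^ 2) * (c * s + d)
      + (b * c * s + b * d - a * c * t) / (d ^ 2 + s * c * d - t * c ^ 2) * c = a := by
    rw [div_mul_eq_mul_div, div_mul_eq_mul_div, ← add_div, div_eq_iff hΔ]
    ring
  have e2 : (a * d - b * c) / (d ^ 2 + s * c * d - t * c ^ 2) * (c * t)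
      + (b * c * s + b * d - a * c * t) / (d ^ 2 + s * c * d - t * c ^ 2) * d = b := by
    rw [div_mul_eq_mul_div, div_mul_eq_mul_div, ← add_div, div_eq_iff hΔ]
    ring
  have e1E := congrArg (algebraMap F E) e1
  have e2E := congrArg (algebraMap F E) e2
  simp only [map_add, map_mul] at e1E e2E
  linear_combination -((algebraMap F E) ((a * d - b * c) / (d ^ 2 + s * c * d - t * c ^ 2))
      * algebraMap F E c) * hα2 - α * e1E - e2E

lemma part1 [Fintype F] (hα : α ∉ Set.range (algebraMap F E))
    (hd : Module.finrank F (IntermediateField.adjoin F {α}) = 2) :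
    (Sbar F α).ncard = Fintype.card F := by
  obtain ⟨s, t, hα2⟩ := exists_sq hα hd
  have hinj : Function.Injective (fun w : F => cosetOf F (α + algebraMap F E w)) := by
    intro w w' h
    have h' : cosetOf F (α + algebraMap F E w) = cosetOf F (α + algebraMap F E w') := h
    have hmem : α + algebraMap F E w ∈ cosetOf F (α + algebraMap F E w') := by
      rw [← h']; exact ⟨1, one_ne_zero, by simp⟩
    obtain ⟨l, hl, hx⟩ := hmem
    have h2 := indep1 hα (x := 1 - l) (y := w - l * w')
      (by simp only [map_sub, map_mul, map_one]; linear_combination hx)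
    have hl1 : l = 1 := by linear_combination -h2.1
    have h4 := h2.2
    rw [hl1] at h4
    linear_combination h4
  have himg : Sbar F α = (fun w : F => cosetOf F (α + algebraMap F E w)) '' Set.univ := by
    rw [Sbar_eq]
    ext x
    constructor
    · rintro ⟨β, ⟨a, b, c, d, hdet, rfl⟩, rfl⟩
      obtain ⟨u, v, hu, heq⟩ := alpha'_eq hα hα2 hdet
      refine ⟨v / u, trivial, ?_⟩
      show cosetOf F (α + algebraMap F E (v / u)) = _
      have hu' : (algebraMap F E) u ≠ 0 := by simpa using hu
      have h3 : algebraMap F E u * α + algebraMap F E v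
          = algebraMap F E u * (α + algebraMap F E (v / u)) := by
        rw [map_div₀, mul_add]
        congr 1
        field_simp
      rw [heq, h3, cosetOf_smul hu]
    · rintro ⟨w, -, rfl⟩
      exact ⟨α + algebraMap F E w, ⟨1, w, 0, 1, by simp, by simp⟩, rfl⟩
  rw [himg, Set.ncard_image_of_injective _ hinj, Set.ncard_univ, Nat.card_eq_fintype_card]

end aux

def el (F : Type*) {E : Type*} [Field F] [Field E] [Algebra F E] (α : E) : Option F → E
  | none => 1
  | some b => α + algebraMap F E b

section aux2
variable {F E : Type*} [Field F] [Field E] [Algebra F E] {α : E}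

lemma el_ne (hα : α ∉ Set.range (algebraMap F E)) : ∀ p : Option F, el F α p ≠ 0 := by
  rintro (_ | b)
  · exact one_ne_zero
  · intro h
    simp only [el] at h
    exact hα ⟨-b, by rw [map_neg]; linear_combination -h⟩

lemma indep2 (hα : α ∉ Set.range (algebraMap F E))
    (hd : 2 < Module.finrank F (IntermediateField.adjoin F {α}))
    {x y z : F}
    (h : algebraMap F E x * α ^ 2 + algebraMap F E y * α + algebraMap F E z = 0) :
    x = 0 ∧ y = 0 ∧ z = 0 := by
  rcases eq_or_ne x 0 with hx | hx
  · subst hx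
    rw [map_zero, zero_mul, zero_add] at h
    obtain ⟨h1, h2⟩ := indep1 hα h
    exact ⟨rfl, h1, h2⟩
  · exfalso
    have hxE : (algebraMap F E) x ≠ 0 := by simpa using hx
    have hα2 : α ^ 2 = algebraMap F E (-y / x) * α + algebraMap F E (-z / x) := by
      have h2 : algebraMap F E x * α ^ 2 = algebraMap F E (-y) * α + algebraMap F E (-z) := by
        rw [map_neg, map_neg]; linear_combination h
      have h3 : algebraMap F E x * (algebraMap F E (-y / x) * α + algebraMap F E (-z / x))
          = algebraMap F E (-y) * α + algebraMap F E (-z) := by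
        rw [map_div₀, map_div₀, map_neg, map_neg]
        field_simp
      exact mul_left_cancel₀ hxE (by rw [h2, ← h3])
    set p : Polynomial F :=
      Polynomial.X ^ 2 - (Polynomial.C (-y / x) * Polynomial.X + Polynomial.C (-z / x)) with hp
    have hdegq : (Polynomial.C (-y / x) * Polynomial.X + Polynomial.C (-z / x)).degree ≤ 1 := by
      apply le_trans (Polynomial.degree_add_le _ _)
      simp only [max_le_iff]
      constructor
      · apply le_trans (Polynomial.degree_mul_le _ _)
        have := Polynomial.degree_C_le (a := -y / x)
        have := Polynomial.degree_X_le (R := F)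
        calc Polynomial.degree (Polynomial.C (-y/x)) + Polynomial.degree (Polynomial.X : Polynomial F)
            ≤ 0 + 1 := add_le_add Polynomial.degree_C_le Polynomial.degree_X_le
          _ = 1 := by norm_num
      · exact le_trans Polynomial.degree_C_le (by norm_num)
    have hmonic : p.Monic := by
      apply Polynomial.monic_X_pow_sub (n := 2)
      exact lt_of_le_of_lt hdegq (by norm_num)
    have haev : Polynomial.aeval α p = 0 := by
      simp only [hp, map_sub, map_add, map_mul, map_pow, Polynomial.aeval_X,
        Polynomial.aeval_C]
      rw [hα2]; ring
    have hint : IsIntegral F α := ⟨p, hmonic, haev⟩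
    have hfr := IntermediateField.adjoin.finrank hint
    have hdegmin : (minpoly F α).degree ≤ p.degree := minpoly.min F α hmonic haev
    have hdegp : p.degree ≤ 2 := by
      apply le_trans (Polynomial.degree_sub_le _ _)
      simp only [max_le_iff]
      exact ⟨by simpa using Polynomial.degree_X_pow_le (R := F) 2, le_trans hdegq (by norm_num)⟩
    have : (minpoly F α).natDegree ≤ 2 :=
      Polynomial.natDegree_le_iff_degree_le.mpr (le_trans hdegmin hdegp)
    omega

lemma part2 [Fintype F] (hα : α ∉ Set.range (algebraMap F E))
    (hd : 2 < Module.finrank F (IntermediateField.adjoin F {α})) :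
    (Sbar F α).ncard = Fintype.card F ^ 2 + Fintype.card F := by
  classical
  have key : ∀ x y z : F,
      algebraMap F E x * α ^ 2 + algebraMap F E y * α + algebraMap F E z = 0 →
      x = 0 ∧ y = 0 ∧ z = 0 := fun x y z h => indep2 hα hd h
  have hne := el_ne hα
  set S : Set (Option F × Option F) := {p | p.1 ≠ p.2} with hS
  have himg : Sbar F α = (fun p : Option F × Option F => cosetOf F (el F α p.1 / el F α p.2)) '' S := by
    rw [Sbar_eq]
    ext x
    constructor
    · rintro ⟨β, ⟨a, b, c, d, hdet, rfl⟩, rfl⟩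
      rcases eq_or_ne a 0 with ha | ha
      · subst ha
        have hb : b ≠ 0 := fun h => hdet (by rw [h]; ring)
        have hc : c ≠ 0 := fun h => hdet (by rw [h]; ring)
        have hcE : (algebraMap F E) c ≠ 0 := by simpa using hc
        refine ⟨(none, some (d / c)), by simp [hS], ?_⟩
        have hden := den_ne hα (c := c) (d := d) (fun h => hc h.1)
        have hden2 : α + algebraMap F E (d / c) ≠ 0 := by
          have := den_ne hα (c := 1) (d := d / c) (by simp)
          simpa using this
        have heq : algebraMap F E (b / c) * (el F α none / el F α (some (d / c)))
            = (algebraMap F E 0 * α + algebraMap F E b) /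
              (algebraMap F E c * α + algebraMap F E d) := by
          simp only [el]
          rw [mul_one_div, div_eq_div_iff hden2 hden, map_div₀, map_div₀, map_zero]
          field_simp
          ring
        rw [← heq, cosetOf_smul (div_ne_zero hb hc)]
      · rcases eq_or_ne c 0 with hc | hc
        · subst hc
          have hd0 : d ≠ 0 := fun h => hdet (by rw [h]; ring)
          have haE : (algebraMap F E) a ≠ 0 := by simpa using ha
          have hdE : (algebraMap F E) d ≠ 0 := by simpa using hd0
          refine ⟨(some (b / a), none), by simp [hS], ?_⟩
          have heq : (algebraMap F E a * α + algebraMap F E b) /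
              (algebraMap F E 0 * α + algebraMap F E d)
              = algebraMap F E (a / d) * (el F α (some (b / a)) / el F α none) := by
            simp only [el, map_zero, zero_mul, zero_add, map_div₀]
            field_simp
          rw [heq, cosetOf_smul (div_ne_zero ha hd0)]
        · have haE : (algebraMap F E) a ≠ 0 := by simpa using ha
          have hcE : (algebraMap F E) c ≠ 0 := by simpa using hc
          have hpq : b / a ≠ d / c := by
            intro h
            rw [div_eq_div_iff ha hc] at h
            exact hdet (by linear_combination -h)
          refine ⟨(some (b / a), some (d / c)), by simpa [hS] using hpq, ?_⟩
          have hden := den_ne hα (c := c) (d := d) (fun h => hc h.1)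
          have hden2 : α + algebraMap F E (d / c) ≠ 0 := by
            have := den_ne hα (c := 1) (d := d / c) (by simp)
            simpa using this
          have heq : algebraMap F E (a / c) * (el F α (some (b / a)) / el F α (some (d / c)))
              = (algebraMap F E a * α + algebraMap F E b) /
                (algebraMap F E c * α + algebraMap F E d) := by
            simp only [el]
            rw [mul_div_assoc', div_eq_div_iff hden2 hden, map_div₀, map_div₀, map_div₀]
            field_simp
          rw [← heq, cosetOf_smul (div_ne_zero ha hc)]
    · rintro ⟨⟨p, q⟩, hpq, rfl⟩
      simp only [hS, Set.mem_setOf_eq] at hpq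
      refine ⟨el F α p / el F α q, ?_, rfl⟩
      rcases p with _ | b <;> rcases q with _ | d
      · exact absurd rfl hpq
      · exact ⟨0, 1, 1, d, by simp, by simp [el]⟩
      · exact ⟨1, b, 0, 1, by simp, by simp [el]⟩
      · have hbd : b ≠ d := by simpa using hpq
        exact ⟨1, b, 1, d, by simpa using hbd.symm, by simp [el]⟩
  have hinjOn : S.InjOn (fun p : Option F × Option F => cosetOf F (el F α p.1 / el F α p.2)) := by
    rintro ⟨p, q⟩ hpq ⟨p', q'⟩ hpq' h
    simp only [hS, Set.mem_setOf_eq] at hpq hpq'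
    have h' : cosetOf F (el F α p / el F α q) = cosetOf F (el F α p' / el F α q') := h
    have hmem : el F α p / el F α q ∈ cosetOf F (el F α p' / el F α q') := by
      rw [← h']; exact ⟨1, one_ne_zero, by simp⟩
    obtain ⟨l, hl, hx⟩ := hmem
    have hcross : el F α p * el F α q' = algebraMap F E l * (el F α p' * el F α q) := by
      field_simp [hne q, hne q'] at hx
      linear_combination hx
    rcases p with _ | b <;> rcases q with _ | d <;> rcases p' with _ | b' <;>
        rcases q' with _ | d' <;> simp only [el] at hcross
    · exact absurd rfl hpq
    · exact absurd rfl hpq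
    · exact absurd rfl hpq
    · exact absurd rfl hpq
    -- p = none, q = some d
    · exact absurd rfl hpq'
    · -- p' = none, q' = some d' : 1*(α+φd') = φl*(1*(α+φd))
      obtain ⟨h1, h2, h3⟩ := key 0 (1 - l) (d' - l * d)
        (by simp only [map_sub, map_mul, map_one, map_zero]; linear_combination hcross)
      have hl1 : l = 1 := by linear_combination -h2
      subst hl1
      have : d' = d := by linear_combination h3
      simp [this]
    · -- p' = some b', q' = none : 1*1 = φl*((α+φb')*(α+φd))
      obtain ⟨h1, h2, h3⟩ := key (-l) (-(l * (b' + d))) (1 - l * (b' * d))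
        (by simp only [map_sub, map_mul, map_one, map_neg, map_add]; linear_combination hcross)
      exact absurd (by linear_combination -h1) hl
    · -- p' = some b', q' = some d' : 1*(α+φd') = φl*((α+φb')*(α+φd))
      obtain ⟨h1, h2, h3⟩ := key (-l) (1 - l * (b' + d)) (d' - l * (b' * d))
        (by simp only [map_sub, map_mul, map_one, map_neg, map_add]; linear_combination hcross)
      exact absurd (by linear_combination -h1) hl
    -- p = some b, q = none
    · exact absurd rfl hpq'
    · -- p' = none, q' = some d' : (α+φb)*(α+φd') = φl*(1*1)
      obtain ⟨h1, h2, h3⟩ := key 1 (b + d') (b * d' - l)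
        (by simp only [map_sub, map_mul, map_one, map_add]; linear_combination hcross)
      exact absurd h1 one_ne_zero
    · -- p' = some b', q' = none : (α+φb)*1 = φl*((α+φb')*1)
      obtain ⟨h1, h2, h3⟩ := key 0 (1 - l) (b - l * b')
        (by simp only [map_sub, map_mul, map_one, map_zero]; linear_combination hcross)
      have hl1 : l = 1 := by linear_combination -h2
      subst hl1
      have : b = b' := by linear_combination h3
      simp [this]
    · -- p' = some b', q' = some d' : (α+φb)*(α+φd') = φl*((α+φb')*1)
      obtain ⟨h1, h2, h3⟩ := key 1 (b + d' - l) (b * d' - l * b')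
        (by simp only [map_sub, map_mul, map_one, map_add]; linear_combination hcross)
      exact absurd h1 one_ne_zero
    -- p = some b, q = some d
    · exact absurd rfl hpq'
    · -- p' = none, q' = some d' : (α+φb)*(α+φd') = φl*(1*(α+φd))
      obtain ⟨h1, h2, h3⟩ := key 1 (b + d' - l) (b * d' - l * d)
        (by simp only [map_sub, map_mul, map_one, map_add]; linear_combination hcross)
      exact absurd h1 one_ne_zero
    · -- p' = some b', q' = none : (α+φb)*1 = φl*((α+φb')*(α+φd))
      obtain ⟨h1, h2, h3⟩ := key (-l) (1 - l * (b' + d)) (b - l * (b' * d))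
        (by simp only [map_sub, map_mul, map_one, map_neg, map_add]; linear_combination hcross)
      exact absurd (by linear_combination -h1) hl
    · -- the main case
      have hbd : b ≠ d := by simpa using hpq
      obtain ⟨h1, h2, h3⟩ := key (1 - l) (b + d' - l * (b' + d)) (b * d' - l * (b' * d))
        (by simp only [map_sub, map_mul, map_one, map_add]; linear_combination hcross)
      have hl1 : l = 1 := by linear_combination -h1
      subst hl1
      have hfac : (b - b') * (d - b) = 0 := by linear_combination h3 - b * h2
      rcases mul_eq_zero.mp hfac with h4 | h4
      · have hb : b = b' := by linear_combination h4
        subst hb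
        have : d' = d := by linear_combination h2
        simp [this]
      · exact absurd (by linear_combination -h4) hbd
  rw [himg, Set.ncard_image_of_injOn hinjOn]
  have hScompl : S = (Set.diagonal (Option F))ᶜ := by
    ext ⟨p, q⟩
    simp [hS, Set.diagonal]
  have hdiag : (Set.diagonal (Option F)).ncard = Fintype.card (Option F) := by
    have himg2 : Set.diagonal (Option F) = (fun x : Option F => (x, x)) '' Set.univ := by
      ext ⟨p, q⟩
      constructor
      · intro hmem
        exact ⟨p, trivial, by rw [show p = q from hmem]⟩
      · rintro ⟨x, -, hx⟩
        rw [← hx]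
        exact rfl
    rw [himg2, Set.ncard_image_of_injective _ (fun x y h => (Prod.ext_iff.mp h).1),
      Set.ncard_univ, Nat.card_eq_fintype_card]
  have hcompl := Set.ncard_add_ncard_compl (Set.diagonal (Option F))
  rw [hdiag] at hcompl
  rw [hScompl]
  have e1 : Nat.card (Option F × Option F) = (Fintype.card F + 1) * (Fintype.card F + 1) := by
    rw [Nat.card_eq_fintype_card, Fintype.card_prod, Fintype.card_option]
  rw [e1, Fintype.card_option] at hcompl
  have e2 : (Fintype.card F + 1) * (Fintype.card F + 1)
      = Fintype.card F * Fintype.card F + 2 * Fintype.card F + 1 := by ring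
  have e3 : Fintype.card F ^ 2 = Fintype.card F * Fintype.card F := sq (Fintype.card F)
  omega

end aux2

theorem stmt_1 (F E : Type*) [Field F] [Fintype F] [Field E] [Algebra F E]
    (q : ℕ) (hq : Fintype.card F = q)
    (α : E) (hα : α ∉ Set.range (algebraMap F E)) :
    (Module.finrank F (IntermediateField.adjoin F {α}) = 2 →
      (Sbar F α).ncard = q) ∧
    (2 < Module.finrank F (IntermediateField.adjoin F {α}) →
      (Sbar F α).ncard = q ^ 2 + q) := by
  constructor
  · intro h
    rw [← hq]
    exact part1 hα h
  · intro h
    rw [← hq]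
    exact part2 hα h
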